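/- Let n, p ∈ ℕ with n ≥ 1, let L > 0, and let g : ℝⁿ × ℝᵖ → ℝⁿ satisfy ‖g(x,u) − g(y,u)‖ ≤ L‖x − y‖ for all x, y, u; define F(e,u) = e + g(e,u). Let Q, P be real symmetric positive-definite n×n matrices, R a real symmetric positive-semidefinite p×p matrix, K a real p×n matrix, and Q* = Q + KᵀRK. Let ε_r > 0 and suppose that for every e ∈ ℝⁿ with eᵀPe ≤ ε_r², F(e, Ke)ᵀ P F(e, Ke) ≤ eᵀPe − eᵀQ*e. Let S ⊆ ℝⁿ and L_Q, L_P ≥ 0 be such that for all x, y ∈ S, xᵀQx − yᵀQy ≤ L_Q‖x−y‖ and xᵀPx − yᵀPy ≤ L_P‖x−y‖. Let N ≥ 2, let (u_τ)_{τ=0}^{N−1} be inputs, and define: the nominal optimal trajectory ẽ₀ = e₀, ẽ_{τ+1} = F(ẽ_τ, u_τ) for 0 ≤ τ ≤ N−1; the actual next state e₁ = F(e₀, u₀) + d with ‖d‖ ≤ η; the candidate inputs ū_τ = u_{τ+1} for 0 ≤ τ ≤ N−2 and ū_{N−1} = K ē_{N−1}; and the candidate trajectory ē₀ = e₁, ē_{τ+1}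 = F(ē_τ, ū_τ) for 0 ≤ τ ≤ N−1. Assume ē_{N−1}ᵀ P ē_{N−1} ≤ ε_r² and that ẽ_τ ∈ S for 1 ≤ τ ≤ N and ē_τ ∈ S for 0 ≤ τ ≤ N−1. Define the costs H̃ = Σ_{τ=0}^{N−1}(ẽ_τᵀQẽ_τ + u_τᵀRu_τ) + ẽ_NᵀPẽ_N and H̄ = Σ_{τ=0}^{N−1}(ē_τᵀQē_τ + ū_τᵀRū_τ) + ē_NᵀPē_N. Then H̄ − H̃ ≤ −e₀ᵀQe₀ − u₀ᵀRu₀ + [((1+L)^{N−1} − 1)/L · L_Q + (1+L)^{N−1} · L_P] · η. -/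

import Mathlib

open Matrix

/-- one-step cost-decrease estimate at the heart of Theorem 1:
the candidate cost after one disturbed step, using the shifted previous
optimal inputs plus the terminal feedback `K`, exceeds the previous optimal
cost by at most `−‖e₀‖²_Q − ‖u₀‖²_R + ψ(1)·η` with
`ψ(1) = ((1+L)^{N−1}−1)/L · L_Q + (1+L)^{N−1} · L_P`. -/
theorem stmt_15 (n p : ℕ) (hn : 1 ≤ n) (L : ℝ) (hL : 0 < L)
    (g : EuclideanSpace ℝ (Fin n) → EuclideanSpace ℝ (Fin p) → EuclideanSpace ℝ (Fin n))
    (hg : ∀ x y : EuclideanSpace ℝ (Fin n), ∀ u : EuclideanSpace ℝ (Fin p),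
      ‖g x u - g y u‖ ≤ L * ‖x - y‖)
    (Q P : Matrix (Fin n) (Fin n) ℝ) (hQ : Q.PosDef) (hP : P.PosDef)
    (R : Matrix (Fin p) (Fin p) ℝ) (hR : R.PosSemidef)
    (K : Matrix (Fin p) (Fin n) ℝ)
    (Qstar : Matrix (Fin n) (Fin n) ℝ) (hQstar : Qstar = Q + Kᵀ * R * K)
    (εr : ℝ) (hεr : 0 < εr)
    (htermdec : ∀ e : EuclideanSpace ℝ (Fin n), e ⬝ᵥ P.mulVec e ≤ εr ^ 2 →
      (e + g e (WithLp.toLp 2 (K.mulVec e))) ⬝ᵥ P.mulVec (e + g e (WithLp.toLp 2 (K.mulVec e))) ≤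
        e ⬝ᵥ P.mulVec e - e ⬝ᵥ Qstar.mulVec e)
    (S : Set (EuclideanSpace ℝ (Fin n))) (LQ LP : ℝ) (hLQ : 0 ≤ LQ) (hLP : 0 ≤ LP)
    (hQlip : ∀ x ∈ S, ∀ y ∈ S,
      x ⬝ᵥ Q.mulVec x - y ⬝ᵥ Q.mulVec y ≤ LQ * ‖x - y‖)
    (hPlip : ∀ x ∈ S, ∀ y ∈ S,
      x ⬝ᵥ P.mulVec x - y ⬝ᵥ P.mulVec y ≤ LP * ‖x - y‖)
    (N : ℕ) (hN : 2 ≤ N)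
    (u : ℕ → EuclideanSpace ℝ (Fin p))
    (e₀ : EuclideanSpace ℝ (Fin n))
    (etil : ℕ → EuclideanSpace ℝ (Fin n))
    (hetil0 : etil 0 = e₀)
    (hetil : ∀ τ < N, etil (τ + 1) = etil τ + g (etil τ) (u τ))
    (η : ℝ) (d e₁ : EuclideanSpace ℝ (Fin n)) (hd : ‖d‖ ≤ η)
    (he₁ : e₁ = e₀ + g e₀ (u 0) + d)
    (ubar : ℕ → EuclideanSpace ℝ (Fin p))
    (ebar : ℕ → EuclideanSpace ℝ (Fin n))
    (hubar₁ : ∀ τ < N - 1, ubar τ = u (τ + 1))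
    (hubar₂ : ubar (N - 1) = K.mulVec (ebar (N - 1)))
    (hebar0 : ebar 0 = e₁)
    (hebar : ∀ τ < N, ebar (τ + 1) = ebar τ + g (ebar τ) (ubar τ))
    (hterm : ebar (N - 1) ⬝ᵥ P.mulVec (ebar (N - 1)) ≤ εr ^ 2)
    (hetilS : ∀ τ, 1 ≤ τ → τ ≤ N → etil τ ∈ S)
    (hebarS : ∀ τ ≤ N - 1, ebar τ ∈ S) :
    (∑ τ ∈ Finset.range N,
        (ebar τ ⬝ᵥ Q.mulVec (ebar τ) + ubar τ ⬝ᵥ R.mulVec (ubar τ)) +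
      ebar N ⬝ᵥ P.mulVec (ebar N)) -
    (∑ τ ∈ Finset.range N,
        (etil τ ⬝ᵥ Q.mulVec (etil τ) + u τ ⬝ᵥ R.mulVec (u τ)) +
      etil N ⬝ᵥ P.mulVec (etil N)) ≤
    -(e₀ ⬝ᵥ Q.mulVec e₀) - u 0 ⬝ᵥ R.mulVec (u 0) +
      (((1 + L) ^ (N - 1) - 1) / L * LQ + (1 + L) ^ (N - 1) * LP) * η := by
  obtain ⟨M, rfl⟩ : ∃ M, N = M + 1 := ⟨N - 1, by omega⟩
  have hM1 : 1 ≤ M := by omega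
  have hη : 0 ≤ η := le_trans (norm_nonneg d) hd
  have h1L : (0:ℝ) ≤ 1 + L := by linarith
  simp only [Nat.add_sub_cancel] at hubar₁ hubar₂ hterm hebarS ⊢
  -- divergence bound between the candidate and shifted nominal trajectory
  have key : ∀ τ, τ ≤ M → ‖ebar τ - etil (τ + 1)‖ ≤ (1 + L) ^ τ * η := by
    intro τ
    induction τ with
    | zero =>
      intro _
      have h1 : etil 1 = etil 0 + g (etil 0) (u 0) := hetil 0 (by omega)
      have hdd : ebar 0 - etil 1 = d := by
        rw [hebar0, he₁, h1, hetil0]; abel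
      simpa [hdd] using hd
    | succ τ ih =>
      intro hτ
      have ih' := ih (by omega)
      have hb : ebar (τ + 1) = ebar τ + g (ebar τ) (ubar τ) := hebar τ (by omega)
      have hu : ubar τ = u (τ + 1) := hubar₁ τ (by omega)
      have ht : etil (τ + 1 + 1) = etil (τ + 1) + g (etil (τ + 1)) (u (τ + 1)) :=
        hetil (τ + 1) (by omega)
      have hdiff : ebar (τ + 1) - etil (τ + 1 + 1)
          = (ebar τ - etil (τ + 1)) +
            (g (ebar τ) (u (τ + 1)) - g (etil (τ + 1)) (u (τ + 1))) := by
        rw [hb, ht, hu]; abel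
      calc ‖ebar (τ + 1) - etil (τ + 1 + 1)‖
          ≤ ‖ebar τ - etil (τ + 1)‖ +
            ‖g (ebar τ) (u (τ + 1)) - g (etil (τ + 1)) (u (τ + 1))‖ := by
            rw [hdiff]; exact norm_add_le _ _
        _ ≤ ‖ebar τ - etil (τ + 1)‖ + L * ‖ebar τ - etil (τ + 1)‖ :=
            add_le_add le_rfl (hg _ _ _)
        _ = (1 + L) * ‖ebar τ - etil (τ + 1)‖ := by ring
        _ ≤ (1 + L) * ((1 + L) ^ τ * η) := by
            apply mul_le_mul_of_nonneg_left ih' h1L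
        _ = (1 + L) ^ (τ + 1) * η := by ring
  -- terminal step bound
  have hub : ubar M = K.mulVec (ebar M) := hubar₂
  have hub' : ubar M = WithLp.toLp 2 (K.mulVec (ebar M)) := by
    rw [← hub]
  have hstepM : ebar (M + 1) = ebar M + g (ebar M) (WithLp.toLp 2 (K.mulVec (ebar M))) := by
    rw [hebar M (by omega), hub']
  have hQsplit : ebar M ⬝ᵥ Qstar.mulVec (ebar M)
      = ebar M ⬝ᵥ Q.mulVec (ebar M) +
        (K.mulVec (ebar M)) ⬝ᵥ R.mulVec (K.mulVec (ebar M)) := by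
    rw [hQstar, Matrix.add_mulVec, dotProduct_add]
    congr 1
    rw [← Matrix.mulVec_mulVec, ← Matrix.mulVec_mulVec,
      Matrix.dotProduct_mulVec (A := Kᵀ), Matrix.vecMul_transpose]
  have htermbd : ebar M ⬝ᵥ Q.mulVec (ebar M) + ubar M ⬝ᵥ R.mulVec (ubar M) +
      ebar (M + 1) ⬝ᵥ P.mulVec (ebar (M + 1)) ≤ ebar M ⬝ᵥ P.mulVec (ebar M) := by
    have h := htermdec (ebar M) hterm
    rw [← hstepM] at h
    have h2 : (ebar (M + 1)).ofLp
        = (ebar M).ofLp + (g (ebar M) (WithLp.toLp 2 (K.mulVec (ebar M)))).ofLp := by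
      simp [hstepM]
    rw [← h2] at h
    rw [hub]
    linarith [hQsplit]
  -- P Lipschitz bound at the end
  have hPbd : ebar M ⬝ᵥ P.mulVec (ebar M) - etil (M + 1) ⬝ᵥ P.mulVec (etil (M + 1))
      ≤ LP * ((1 + L) ^ M * η) := by
    calc ebar M ⬝ᵥ P.mulVec (ebar M) - etil (M + 1) ⬝ᵥ P.mulVec (etil (M + 1))
        ≤ LP * ‖ebar M - etil (M + 1)‖ :=
          hPlip _ (hebarS M le_rfl) _ (hetilS (M + 1) (by omega) le_rfl)
      _ ≤ LP * ((1 + L) ^ M * η) :=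
          mul_le_mul_of_nonneg_left (key M le_rfl) hLP
  -- Q Lipschitz bound along the trajectory
  have hQsum : ∑ τ ∈ Finset.range M,
      (ebar τ ⬝ᵥ Q.mulVec (ebar τ) - etil (τ + 1) ⬝ᵥ Q.mulVec (etil (τ + 1)))
      ≤ LQ * η * ∑ τ ∈ Finset.range M, (1 + L) ^ τ := by
    rw [Finset.mul_sum]
    apply Finset.sum_le_sum
    intro τ hτ
    have hτM : τ < M := Finset.mem_range.mp hτ
    calc ebar τ ⬝ᵥ Q.mulVec (ebar τ) - etil (τ + 1) ⬝ᵥ Q.mulVec (etil (τ + 1))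
        ≤ LQ * ‖ebar τ - etil (τ + 1)‖ :=
          hQlip _ (hebarS τ (by omega)) _ (hetilS (τ + 1) (by omega) (by omega))
      _ ≤ LQ * ((1 + L) ^ τ * η) :=
          mul_le_mul_of_nonneg_left (key τ (by omega)) hLQ
      _ = LQ * η * (1 + L) ^ τ := by ring
  have hgeom : ∑ τ ∈ Finset.range M, (1 + L) ^ τ = ((1 + L) ^ M - 1) / L := by
    rw [geom_sum_eq (by intro h; linarith : (1:ℝ) + L ≠ 1)]
    congr 1
    ring
  -- sum rearrangement
  have hbar : ∑ τ ∈ Finset.range (M + 1),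
      (ebar τ ⬝ᵥ Q.mulVec (ebar τ) + ubar τ ⬝ᵥ R.mulVec (ubar τ))
      = ∑ τ ∈ Finset.range M, ebar τ ⬝ᵥ Q.mulVec (ebar τ)
        + ∑ τ ∈ Finset.range M, u (τ + 1) ⬝ᵥ R.mulVec (u (τ + 1))
        + (ebar M ⬝ᵥ Q.mulVec (ebar M) + ubar M ⬝ᵥ R.mulVec (ubar M)) := by
    rw [Finset.sum_range_succ, Finset.sum_add_distrib]
    congr 2
    apply Finset.sum_congr rfl
    intro τ hτ
    rw [hubar₁ τ (Finset.mem_range.mp hτ)]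
  have htil : ∑ τ ∈ Finset.range (M + 1),
      (etil τ ⬝ᵥ Q.mulVec (etil τ) + u τ ⬝ᵥ R.mulVec (u τ))
      = ∑ τ ∈ Finset.range M, etil (τ + 1) ⬝ᵥ Q.mulVec (etil (τ + 1))
        + ∑ τ ∈ Finset.range M, u (τ + 1) ⬝ᵥ R.mulVec (u (τ + 1))
        + (e₀ ⬝ᵥ Q.mulVec e₀ + u 0 ⬝ᵥ R.mulVec (u 0)) := by
    rw [Finset.sum_range_succ', Finset.sum_add_distrib, hetil0]
  rw [hbar, htil]
  have hsplit : ∑ τ ∈ Finset.range M, ebar τ ⬝ᵥ Q.mulVec (ebar τ)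
      - ∑ τ ∈ Finset.range M, etil (τ + 1) ⬝ᵥ Q.mulVec (etil (τ + 1))
      = ∑ τ ∈ Finset.range M,
        (ebar τ ⬝ᵥ Q.mulVec (ebar τ) - etil (τ + 1) ⬝ᵥ Q.mulVec (etil (τ + 1))) := by
    rw [Finset.sum_sub_distrib]
  have hQb := hQsum
  rw [hgeom] at hQb
  rw [← hsplit] at hQb
  nlinarith [htermbd, hPbd, hQb]
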